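/- arXiv:2304.05500 — 4 statements merged into one kernel-verified Lean document; each statement's English description precedes it below -/
import Mathlib

section
/- Let 𝒢 = (𝒱, ℰ) be a finite simple graph and let (Γ_v)_{v ∈ 𝒱} be a family of groups, each of which is torsion-free. Then the graph product group 𝒢{Γ_v} is torsion-free; that is, every element of 𝒢{Γ_v} of finite order is the identity. -/
open scoped commutatorElement

/-- A monoid is torsion-free if no element other than the identity has finite order
(the definition of `Monoid.IsTorsionFree` in the older Mathlib, since removed). -/
def Monoid.IsTorsionFree (G : Type*) [Monoid G] : Prop :=
  ∀ g : G, g ≠ 1 → ¬IsOfFinOrder g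

/-- The set of relators for a graph product: commutators of elements of vertex groups
joined by an edge of the graph. -/
def graphProductRels {V : Type*} (G : SimpleGraph V) (Γ : V → Type*) [∀ v, Group (Γ v)] :
    Subgroup (Monoid.CoprodI Γ) :=
  Subgroup.normalClosure
    {x | ∃ (u v : V) (_ : G.Adj u v) (g : Γ u) (h : Γ v),
      x = ⁅Monoid.CoprodI.of g, Monoid.CoprodI.of h⁆}

/-- The graph product group `𝒢{Γ_v}`: the quotient of the free product `∗_v Γ_v` by the
normal closure of the commutators `[g, h]` with `g ∈ Γ_u`, `h ∈ Γ_v`, `(u, v)` an edge. -/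
def GraphProduct {V : Type*} (G : SimpleGraph V) (Γ : V → Type*) [∀ v, Group (Γ v)] : Type _ :=
  Monoid.CoprodI Γ ⧸ graphProductRels G Γ

instance {V : Type*} (G : SimpleGraph V) (Γ : V → Type*) [∀ v, Group (Γ v)] :
    (graphProductRels G Γ).Normal :=
  Subgroup.normalClosure_normal

noncomputable instance {V : Type*} (G : SimpleGraph V) (Γ : V → Type*) [∀ v, Group (Γ v)] :
    Group (GraphProduct G Γ) :=
  QuotientGroup.Quotient.group _

open Function
namespace GraphProductAux
open Monoid Monoid.CoprodI Monoid.PushoutI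

variable {ι : Type*} {H : Type*} [Group H] {G : ι → Type*} [∀ i, Group (G i)]
  {φ : ∀ i, H →* G i}

def lprod (φ : ∀ i, H →* G i) (l : List (Σ i, G i)) : PushoutI φ :=
  (l.map fun p => of p.1 p.2).prod

@[simp] lemma lprod_nil : lprod φ [] = 1 := rfl

@[simp] lemma lprod_cons (p : Σ i, G i) (l : List (Σ i, G i)) :
    lprod φ (p :: l) = of p.1 p.2 * lprod φ l := by
  simp [lprod]

lemma lprod_append (l₁ l₂ : List (Σ i, G i)) :
    lprod φ (l₁ ++ l₂) = lprod φ l₁ * lprod φ l₂ := by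
  simp [lprod]

lemma lprod_surjective [Nonempty ι] (g : PushoutI φ) : ∃ l, lprod φ l = g := by
  induction g using PushoutI.induction_on with
  | of i g => exact ⟨[⟨i, g⟩], by simp⟩
  | base h =>
    exact ⟨[⟨Classical.arbitrary ι, φ _ h⟩], by simp [of_apply_eq_base]⟩
  | mul x y hx hy =>
    obtain ⟨l₁, rfl⟩ := hx
    obtain ⟨l₂, rfl⟩ := hy
    exact ⟨l₁ ++ l₂, lprod_append _ _⟩

lemma ofCoprodI_word_prod (w : Monoid.CoprodI.Word G) :
    ofCoprodI (φ := φ) w.prod = lprod φ w.toList := by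
  rw [Monoid.CoprodI.Word.prod, map_list_prod, lprod, List.map_map]
  simp [Function.comp_def]

lemma phase1 (l : List (Σ i, G i)) :
    ∃ (h : H) (l' : List (Σ i, G i)), lprod φ l = base φ h * lprod φ l' ∧
      l'.length ≤ l.length ∧
      (∀ p ∈ l', p.2 ∉ (φ p.1).range) ∧
      l'.Chain' (fun a b => a.1 ≠ b.1) := by
  induction l with
  | nil => exact ⟨1, [], by simp [List.Chain']⟩
  | cons p t ih =>
    obtain ⟨i, a⟩ := p
    obtain ⟨h, l', hprod, hlen, hred, hch⟩ := ih
    have key : lprod φ (⟨i, a⟩ :: t) = of i (a * φ i h) * lprod φ l' := by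
      rw [lprod_cons, hprod, map_mul, ← mul_assoc, ← of_apply_eq_base φ i, ← map_mul]
    set x := a * φ i h with hx
    rcases l' with _ | ⟨⟨j, b⟩, r⟩
    · by_cases hxr : x ∈ (φ i).range
      · obtain ⟨h', hh'⟩ := hxr
        exact ⟨h', [], by simp [key, ← hh', of_apply_eq_base], by simp, by simp, by simp [List.Chain']⟩
      · refine ⟨1, [⟨i, x⟩], by simp [key], by simp, by simpa using hxr, by simp [List.Chain']⟩
    · by_cases hij : i = j
      · subst hij
        have key2 : lprod φ (⟨i, a⟩ :: t) = of i (x * b) * lprod φ r := by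
          rw [key, lprod_cons, ← mul_assoc, ← map_mul]
        by_cases hyr : x * b ∈ (φ i).range
        · obtain ⟨h', hh'⟩ := hyr
          refine ⟨h', r, ?_, ?_, fun p hp => hred p (List.mem_cons_of_mem _ hp), hch.tail⟩
          · rw [key2, ← hh', of_apply_eq_base]
          · simpa using Nat.le_succ_of_le ((Nat.le_succ _).trans hlen)
        · refine ⟨1, ⟨i, x * b⟩ :: r, by simp [key2], ?_, ?_, ?_⟩
          · simpa using (Nat.le_succ _).trans hlen
          · intro p hp
            rcases List.mem_cons.1 hp with rfl | hp
            · exact hyr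
            · exact hred p (List.mem_cons_of_mem _ hp)
          · simp only [List.Chain', List.isChain_cons] at hch ⊢
            exact ⟨hch.1, hch.2⟩
      · by_cases hxr : x ∈ (φ i).range
        · obtain ⟨h', hh'⟩ := hxr
          exact ⟨h', ⟨j, b⟩ :: r, by rw [key, ← hh', of_apply_eq_base], Nat.le_succ_of_le hlen,
            hred, hch⟩
        · refine ⟨1, ⟨i, x⟩ :: ⟨j, b⟩ :: r, by simp [key], by simpa using hlen, ?_, ?_⟩
          · intro p hp
            rcases List.mem_cons.1 hp with rfl | hp
            · exact hxr
            · exact hred p hp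
          · exact List.isChain_cons_cons.mpr ⟨hij, hch⟩

end GraphProductAux

namespace GraphProductAux
open Monoid Monoid.CoprodI Monoid.PushoutI

variable {ι : Type*} {H : Type*} [Group H] {G : ι → Type*} [∀ i, Group (G i)]
  {φ : ∀ i, H →* G i}

lemma conj_aux [Nonempty ι] :
    ∀ (n : ℕ) (l : List (Σ i, G i)), l.length ≤ n →
    ∃ u : PushoutI φ,
      (∃ (i : ι) (x : G i), lprod φ l = u * of i x * u⁻¹) ∨
      (∃ (i j : ι) (w : Monoid.CoprodI.NeWord G i j), i ≠ j ∧
        (∀ p ∈ w.toList, p.2 ∉ (φ p.1).range) ∧ lprod φ l = u * ofCoprodI w.prod * u⁻¹) := by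
  intro n
  induction n with
  | zero =>
    intro l hl
    rw [Nat.le_zero, List.length_eq_zero_iff] at hl
    exact ⟨1, Or.inl ⟨Classical.arbitrary ι, 1, by simp [hl]⟩⟩
  | succ n ih =>
    intro l hl
    obtain ⟨h, l', hprod, hlen, hred, hch⟩ := phase1 (φ := φ) l
    rcases l' with _ | ⟨⟨i, a0⟩, r⟩
    · exact ⟨1, Or.inl ⟨Classical.arbitrary ι, φ _ h, by simp [hprod, of_apply_eq_base]⟩⟩
    have key : lprod φ l = lprod φ (⟨i, φ i h * a0⟩ :: r) := by
      rw [hprod, lprod_cons, lprod_cons, ← mul_assoc, ← of_apply_eq_base φ i, ← map_mul]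
    have hared : ∀ p ∈ (⟨i, φ i h * a0⟩ :: r : List (Σ i, G i)), p.2 ∉ (φ p.1).range := by
      intro p hp
      rcases List.mem_cons.1 hp with rfl | hp
      · intro hmem
        refine hred ⟨i, a0⟩ List.mem_cons_self ?_
        have h2 : (φ i h)⁻¹ * (φ i h * a0) ∈ (φ i).range :=
          mul_mem (inv_mem ⟨h, rfl⟩) hmem
        simpa using h2
      · exact hred p (List.mem_cons_of_mem _ hp)
    have hach : (List.Chain' (fun a b => a.1 ≠ b.1) (⟨i, φ i h * a0⟩ :: r : List (Σ i, G i))) := by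
      simp only [List.Chain', List.isChain_cons] at hch ⊢
      exact hch
    rcases eq_or_ne r [] with rfl | hr
    · exact ⟨1, Or.inl ⟨i, φ i h * a0, by simp [key]⟩⟩
    obtain ⟨m, ⟨js, c⟩, rfl⟩ : ∃ m s, r = m ++ [s] :=
      ⟨r.dropLast, r.getLast hr, (List.dropLast_append_getLast hr).symm⟩
    set a := φ i h * a0 with ha
    by_cases hij : js = i
    · subst hij
      have keyc : lprod φ l = of js a * lprod φ (m ++ [⟨js, c * a⟩]) * (of js a)⁻¹ := by
        rw [key, lprod_cons, lprod_append, lprod_append]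
        simp only [lprod_cons, lprod_nil, map_mul]
        group
      have hlen2 : (m ++ [⟨js, c * a⟩] : List (Σ i, G i)).length ≤ n := by
        have := hlen.trans hl
        simp only [List.length_cons, List.length_append, List.length_singleton] at this ⊢
        omega
      obtain ⟨u', hcase⟩ := ih (m ++ [⟨js, c * a⟩]) hlen2
      refine ⟨of js a * u', ?_⟩
      rcases hcase with ⟨i', x, hx⟩ | ⟨i', j', w, hij', hredw, hw⟩
      · refine Or.inl ⟨i', x, ?_⟩
        rw [keyc, hx]; group
      · refine Or.inr ⟨i', j', w, hij', hredw, ?_⟩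
        rw [keyc, hw]; group
    · -- cyclically reduced case
      set L : List (Σ i, G i) := ⟨i, a⟩ :: (m ++ [⟨js, c⟩]) with hL
      have hne : L ≠ [] := by simp [hL]
      set w0 : Monoid.CoprodI.Word G :=
        { toList := L
          ne_one := fun p hp h1 => hared p hp (h1 ▸ one_mem _)
          chain_ne := hach } with hw0
      have hw0ne : w0 ≠ Monoid.CoprodI.Word.empty := by
        intro hcon
        have : w0.toList = [] := by rw [hcon]; rfl
        exact hne this
      obtain ⟨i', j', w', hw'⟩ := Monoid.CoprodI.NeWord.of_word w0 hw0ne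
      have htl : w'.toList = L := congrArg Monoid.CoprodI.Word.toList hw'
      have hhead : L.head? = some ⟨i, a⟩ := rfl
      have hlast : L.getLast? = some ⟨js, c⟩ := by
        rw [hL, ← List.cons_append, List.getLast?_concat]
      have hi' : i' = i := by
        have := w'.toList_head?
        rw [htl, hhead] at this
        exact (congrArg Sigma.fst (Option.some.inj this)).symm
      have hj' : j' = js := by
        have := w'.toList_getLast?
        rw [htl, hlast] at this
        exact (congrArg Sigma.fst (Option.some.inj this)).symm
      refine ⟨1, Or.inr ⟨i', j', w', by rw [hi', hj']; exact fun hc => hij hc.symm,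
        fun p hp => hared p (htl ▸ hp), ?_⟩⟩
      rw [Monoid.CoprodI.NeWord.prod, hw', ofCoprodI_word_prod, key]
      simp [hw0, hL]

end GraphProductAux

namespace GraphProductAux
open Monoid Monoid.CoprodI Monoid.PushoutI

variable {ι : Type*} {H : Type*} [Group H] {G : ι → Type*} [∀ i, Group (G i)]
  {φ : ∀ i, H →* G i}

/-- Powers of a cyclically reduced nonempty word. -/
def powNe {i j : ι} (w : NeWord G i j) (hji : j ≠ i) : ℕ → NeWord G i j
  | 0 => w
  | (k + 1) => NeWord.append w hji (powNe w hji k)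

lemma powNe_prod {i j : ι} (w : NeWord G i j) (hji : j ≠ i) (k : ℕ) :
    (powNe w hji k).prod = w.prod ^ (k + 1) := by
  induction k with
  | zero => simp [powNe]
  | succ k ihk => rw [powNe, NeWord.append_prod, ihk, ← pow_succ']

lemma powNe_toList_mem {i j : ι} (w : NeWord G i j) (hji : j ≠ i) (k : ℕ)
    (p : Σ i, G i) (hp : p ∈ (powNe w hji k).toList) : p ∈ w.toList := by
  induction k with
  | zero => exact hp
  | succ k ihk =>
    rw [powNe] at hp
    rcases List.mem_append.1 hp with hp | hp
    · exact hp
    · exact ihk hp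

theorem pushoutI_isTorsionFree [Nonempty ι] (hφ : ∀ i, Injective (φ i))
    (hG : ∀ i, Monoid.IsTorsionFree (G i)) : Monoid.IsTorsionFree (PushoutI φ) := by
  intro g hg1 hgfin
  obtain ⟨n, hn, hgn⟩ := isOfFinOrder_iff_pow_eq_one.mp hgfin
  obtain ⟨l, rfl⟩ := lprod_surjective (φ := φ) g
  obtain ⟨u, hcase⟩ := conj_aux (φ := φ) l.length l le_rfl
  rcases hcase with ⟨i, x, hx⟩ | ⟨i, j, w, hij, hredw, hw⟩
  · have hxn : of (φ := φ) i (x ^ n) = 1 := by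
      have : (u * of i x * u⁻¹) ^ n = 1 := hx ▸ hgn
      rw [conj_pow, mul_inv_eq_one] at this
      have := mul_left_cancel ((this.trans (mul_one u).symm))
      rw [map_pow]
      exact this
    have hx1 : x = 1 := by
      by_contra hx1
      exact hG i x hx1 (isOfFinOrder_iff_pow_eq_one.mpr
        ⟨n, hn, of_injective hφ i (by rw [hxn, map_one])⟩)
    rw [hx1] at hx
    simp only [map_one, mul_one, mul_inv_cancel] at hx
    exact hg1 hx
  · -- cyclically reduced word case: powers are nontrivial
    have hcn : (ofCoprodI (φ := φ) w.prod) ^ n = 1 := by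
      have : (u * ofCoprodI w.prod * u⁻¹) ^ n = 1 := hw ▸ hgn
      rw [conj_pow, mul_inv_eq_one] at this
      exact mul_left_cancel ((this.trans (mul_one u).symm))
    set w2 := powNe w (Ne.symm hij) (n - 1) with hw2
    have hred2 : Monoid.PushoutI.Reduced φ w2.toWord := fun p hp =>
      hredw p (powNe_toList_mem _ _ _ _ hp)
    have hmem : ofCoprodI (φ := φ) w2.toWord.prod ∈ (base φ).range := by
      have hprod : w2.toWord.prod = w.prod ^ n := by
        rw [← NeWord.prod, hw2, powNe_prod, Nat.sub_add_cancel hn]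
      rw [hprod, map_pow, hcn]
      exact one_mem _
    have := Monoid.PushoutI.Reduced.eq_empty_of_mem_range hφ hred2 hmem
    have htl : w2.toWord.toList = [] := by rw [this]; rfl
    exact w2.toList_ne_nil htl

end GraphProductAux
namespace GraphProductAux

noncomputable section

open Monoid Function

section GPBasic

variable {V : Type*} (G : SimpleGraph V) (Γ : V → Type*) [∀ v, Group (Γ v)]

/-- The canonical projection to the graph product. -/
def gpMk : Monoid.CoprodI Γ →* GraphProduct G Γ := QuotientGroup.mk' (graphProductRels G Γ)

/-- The canonical map of a vertex group into the graph product. -/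
def gpOf (v : V) : Γ v →* GraphProduct G Γ := (gpMk G Γ).comp Monoid.CoprodI.of

lemma gpMk_surjective : Surjective (gpMk G Γ) := QuotientGroup.mk'_surjective _

lemma gp_commute {u v : V} (huv : G.Adj u v) (g : Γ u) (h : Γ v) :
    Commute (gpOf G Γ u g) (gpOf G Γ v h) := by
  rw [← commutatorElement_eq_one_iff_commute]
  have hmem : (⁅Monoid.CoprodI.of g, Monoid.CoprodI.of h⁆ : Monoid.CoprodI Γ) ∈
      graphProductRels G Γ :=
    Subgroup.subset_normalClosure ⟨u, v, huv, g, h, rfl⟩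
  have h1 : gpMk G Γ ⁅Monoid.CoprodI.of g, Monoid.CoprodI.of h⁆ = 1 :=
    (QuotientGroup.eq_one_iff _).mpr hmem
  simpa only [commutatorElement_def, map_mul, map_inv, gpOf, MonoidHom.comp_apply] using h1

/-- Universal property of the graph product. -/
def gpLift {K : Type*} [Group K] (f : ∀ v, Γ v →* K)
    (hf : ∀ u v, G.Adj u v → ∀ g h, Commute (f u g) (f v h)) :
    GraphProduct G Γ →* K :=
  QuotientGroup.lift _ (Monoid.CoprodI.lift f) (by
    refine Subgroup.normalClosure_le_normal ?_
    rintro y ⟨u, v, huv, g, h, rfl⟩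
    rw [SetLike.mem_coe, MonoidHom.mem_ker, commutatorElement_def]
    simp only [map_mul, map_inv, Monoid.CoprodI.lift_of]
    rw [← commutatorElement_def, commutatorElement_eq_one_iff_commute]
    exact hf u v huv g h)

@[simp] lemma gpLift_of {K : Type*} [Group K] (f : ∀ v, Γ v →* K)
    (hf : ∀ u v, G.Adj u v → ∀ g h, Commute (f u g) (f v h)) (v : V) (x : Γ v) :
    gpLift G Γ f hf (gpOf G Γ v x) = f v x := by
  rfl

lemma gp_hom_ext {K : Type*} [Group K] {f g : GraphProduct G Γ →* K}
    (h : ∀ v (x : Γ v), f (gpOf G Γ v x) = g (gpOf G Γ v x)) : f = g := by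
  have h2 : f.comp (gpMk G Γ) = g.comp (gpMk G Γ) :=
    Monoid.CoprodI.ext_hom _ _ fun i => MonoidHom.ext fun x => h i x
  ext x
  obtain ⟨y, rfl⟩ := gpMk_surjective G Γ x
  exact DFunLike.congr_fun h2 y

lemma gp_induction {C : GraphProduct G Γ → Prop} (x : GraphProduct G Γ)
    (one : C 1) (of : ∀ v (g : Γ v), C (gpOf G Γ v g))
    (mul : ∀ x y, C x → C y → C (x * y)) : C x := by
  obtain ⟨y, rfl⟩ := gpMk_surjective G Γ x
  induction y using Monoid.CoprodI.induction_on with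
  | one => simpa using one
  | of i m => exact of i m
  | mul x y hx hy => rw [map_mul]; exact mul _ _ hx hy

end GPBasic

section GPSet

variable {V : Type*} (G : SimpleGraph V) (Γ : V → Type*) [∀ v, Group (Γ v)]

/-- The graph product over a subset of the vertices. -/
abbrev GP (A : Set V) : Type _ := GraphProduct (G.induce A) (fun v : A => Γ v.1)

/-- Canonical map into `GP`. -/
def ofS {A : Set V} (v : A) : Γ v.1 →* GP G Γ A :=
  gpOf (G.induce A) (fun u : A => Γ u.1) v

lemma commS {A : Set V} {u v : A} (huv : G.Adj u.1 v.1) (g : Γ u.1) (h : Γ v.1) :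
    Commute (ofS G Γ u g) (ofS G Γ v h) :=
  gp_commute (G.induce A) (fun u : A => Γ u.1) huv g h

/-- Universal property of `GP`. -/
def liftS {A : Set V} {K : Type*} [Group K] (f : ∀ v : A, Γ v.1 →* K)
    (hf : ∀ u v : A, G.Adj u.1 v.1 → ∀ g h, Commute (f u g) (f v h)) :
    GP G Γ A →* K :=
  gpLift (G.induce A) (fun u : A => Γ u.1) f (fun u v huv => hf u v huv)

@[simp] lemma liftS_of {A : Set V} {K : Type*} [Group K] (f : ∀ v : A, Γ v.1 →* K)
    (hf : ∀ u v : A, G.Adj u.1 v.1 → ∀ g h, Commute (f u g) (f v h)) (v : A) (x : Γ v.1) :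
    liftS G Γ f hf (ofS G Γ v x) = f v x :=
  gpLift_of _ _ _ _ _ _

lemma extS {A : Set V} {K : Type*} [Group K] {f g : GP G Γ A →* K}
    (h : ∀ (v : A) (x : Γ v.1), f (ofS G Γ v x) = g (ofS G Γ v x)) : f = g :=
  gp_hom_ext _ _ h

lemma inductionS {A : Set V} {C : GP G Γ A → Prop} (x : GP G Γ A)
    (one : C 1) (of : ∀ (v : A) (g : Γ v.1), C (ofS G Γ v g))
    (mul : ∀ x y, C x → C y → C (x * y)) : C x :=
  gp_induction _ _ x one of mul

/-- Inclusion homomorphism between graph products over nested vertex sets. -/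
def inclHom {A B : Set V} (hAB : A ⊆ B) : GP G Γ A →* GP G Γ B :=
  liftS G Γ (fun v => ofS G Γ ⟨v.1, hAB v.2⟩)
    (fun u v huv g h => commS G Γ (u := ⟨u.1, hAB u.2⟩) (v := ⟨v.1, hAB v.2⟩) huv g h)

@[simp] lemma inclHom_of {A B : Set V} (hAB : A ⊆ B) (v : A) (x : Γ v.1) :
    inclHom G Γ hAB (ofS G Γ v x) = ofS G Γ ⟨v.1, hAB v.2⟩ x :=
  liftS_of _ _ _ _ _ _

open scoped Classical in
/-- Retraction homomorphism killing the vertex groups outside `A`. -/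
noncomputable def retrHom {A B : Set V} (hAB : A ⊆ B) : GP G Γ B →* GP G Γ A :=
  liftS G Γ (fun v => if h : v.1 ∈ A then ofS G Γ ⟨v.1, h⟩ else 1)
    (by
      intro u v huv g h
      by_cases hu : u.1 ∈ A <;> by_cases hv : v.1 ∈ A
      · rw [dif_pos hu, dif_pos hv]
        exact commS G Γ (u := ⟨u.1, hu⟩) (v := ⟨v.1, hv⟩) huv g h
      · rw [dif_neg hv]; exact Commute.one_right _
      · rw [dif_neg hu]; exact Commute.one_left _
      · rw [dif_neg hu]; exact Commute.one_left _)

lemma inclHom_injective {A B : Set V} (hAB : A ⊆ B) : Injective (inclHom G Γ hAB) := by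
  classical
  have hcomp : (retrHom G Γ hAB).comp (inclHom G Γ hAB) = MonoidHom.id _ := by
    refine extS G Γ ?_
    intro v x
    simp only [MonoidHom.comp_apply, inclHom_of, MonoidHom.id_apply, retrHom, liftS_of]
    rw [dif_pos v.2]
  intro a b hab
  have := DFunLike.congr_arg (retrHom G Γ hAB) hab
  rwa [← MonoidHom.comp_apply, ← MonoidHom.comp_apply, hcomp, MonoidHom.id_apply,
    MonoidHom.id_apply] at this

end GPSet

end

end GraphProductAux
namespace GraphProductAux

noncomputable section

open Monoid Function

/-- Torsion-freeness pulls back along injective homomorphisms. -/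
lemma isTorsionFree_of_injective {K L : Type*} [Group K] [Group L] (f : K →* L)
    (hf : Injective f) (hL : Monoid.IsTorsionFree L) : Monoid.IsTorsionFree K :=
  fun g hg hfin => hL (f g) (fun h1 => hg (hf (by rw [h1, map_one]))) (f.isOfFinOrder hfin)

lemma isTorsionFree_prod {A B : Type*} [Group A] [Group B] (hA : Monoid.IsTorsionFree A)
    (hB : Monoid.IsTorsionFree B) : Monoid.IsTorsionFree (A × B) := by
  intro g hg hfin
  have h1 : g.1 = 1 := by
    by_contra h
    exact hA g.1 h ((MonoidHom.fst A B).isOfFinOrder hfin)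
  have h2 : g.2 = 1 := by
    by_contra h
    exact hB g.2 h ((MonoidHom.snd A B).isOfFinOrder hfin)
  exact hg (Prod.ext h1 h2)

/-- Transport of a vertex group along an equality of vertices. -/
def castHom {V : Type*} (Γ : V → Type*) [∀ v, Group (Γ v)] :
    ∀ {u v : V}, u = v → (Γ u →* Γ v)
  | _, _, rfl => MonoidHom.id _

/-- A two-element family of groups. -/
def boolFam (A B : Type u) : Bool → Type u := fun b => cond b B A

instance {A B : Type u} [Group A] [Group B] : ∀ b, Group (boolFam A B b)
  | false => inferInstanceAs (Group A)
  | true => inferInstanceAs (Group B)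

/-- A two-element family of monoid homs. -/
def boolφ {H : Type v} {A B : Type u} [Group H] [Group A] [Group B] (f : H →* A) (g : H →* B) :
    ∀ b, H →* boolFam A B b
  | false => f
  | true => g

lemma amalgam_isTorsionFree {H : Type v} {A B : Type u} [Group H] [Group A] [Group B]
    (f : H →* A) (g : H →* B) (hf : Injective f) (hg : Injective g)
    (hA : Monoid.IsTorsionFree A) (hB : Monoid.IsTorsionFree B) :
    Monoid.IsTorsionFree (Monoid.PushoutI (boolφ f g)) :=
  pushoutI_isTorsionFree
    (fun b => by cases b with | false => exact hf | true => exact hg)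
    (fun b => by cases b with | false => exact hA | true => exact hB)

lemma commute_inl_inr {A B : Type*} [Group A] [Group B] (a : A) (b : B) :
    Commute ((a, 1) : A × B) ((1, b) : A × B) := by
  simp only [Commute, SemiconjBy, Prod.mk_mul_mk, one_mul, mul_one]

section Main

variable {V : Type*} (G : SimpleGraph V) (Γ : V → Type*) [∀ v, Group (Γ v)]

lemma GP_empty_isTorsionFree : Monoid.IsTorsionFree (GP G Γ (∅ : Set V)) := by
  have htriv : ∀ x : GP G Γ (∅ : Set V), x = 1 := by
    intro x
    induction x using inductionS with
    | one => rfl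
    | of v g => exact absurd v.2 (Set.notMem_empty _)
    | mul x y hx hy => rw [hx, hy, one_mul]
  exact fun g hg _ => absurd (htriv g) hg

/-- The join case: `v` is adjacent to every other vertex of `A`. -/
lemma GP_join_isTorsionFree {A : Set V} {v : V} (hv : v ∈ A)
    (hjoin : ∀ u ∈ A, u ≠ v → G.Adj v u)
    (hΓv : Monoid.IsTorsionFree (Γ v))
    (hS : Monoid.IsTorsionFree (GP G Γ (A \ {v}))) :
    Monoid.IsTorsionFree (GP G Γ A) := by
  classical
  set S : Set V := A \ {v} with hSdef
  -- the comparison map into the direct product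
  refine isTorsionFree_of_injective
    (liftS G Γ (K := Γ v × GP G Γ S)
      (fun u => if h : u.1 = v then (MonoidHom.inl _ _).comp (castHom Γ h)
        else (MonoidHom.inr _ _).comp (ofS G Γ (⟨u.1, u.2, h⟩ : S)))
      ?_) ?_ (isTorsionFree_prod hΓv hS)
  · intro u w huw g x
    split_ifs with h1 h2 h2
    · exact absurd huw (by rw [h1, h2]; exact G.loopless.irrefl v)
    · exact commute_inl_inr _ _
    · exact (commute_inl_inr _ _).symm
    · exact (commS G Γ (A := S) (u := ⟨u.1, u.2, h1⟩) (v := ⟨w.1, w.2, h2⟩) huw g x).map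
        (MonoidHom.inr _ _)
  · -- injectivity via a retraction built from `noncommCoprod`
    set Φ := liftS G Γ (K := Γ v × GP G Γ S)
      (fun u => if h : u.1 = v then (MonoidHom.inl _ _).comp (castHom Γ h)
        else (MonoidHom.inr _ _).comp (ofS G Γ (⟨u.1, u.2, h⟩ : S))) _ with hΦ
    have hcommψ : ∀ (a : Γ v) (b : GP G Γ S),
        Commute (ofS G Γ (⟨v, hv⟩ : A) a) (inclHom G Γ Set.diff_subset b) := by
      intro a b
      induction b using inductionS with
      | one => rw [map_one]; exact Commute.one_right _
      | of u g =>
        rw [inclHom_of]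
        exact commS G Γ (u := ⟨v, hv⟩) (v := ⟨u.1, Set.diff_subset u.2⟩)
          (hjoin u.1 u.2.1 u.2.2) a g
      | mul x y hx hy => rw [map_mul]; exact Commute.mul_right hx hy
    set Ψ : Γ v × GP G Γ S →* GP G Γ A :=
      (ofS G Γ (⟨v, hv⟩ : A)).noncommCoprod (inclHom G Γ Set.diff_subset) hcommψ with hΨ
    have hcomp : Ψ.comp Φ = MonoidHom.id _ := by
      refine extS G Γ ?_
      intro u x
      rw [MonoidHom.comp_apply, MonoidHom.id_apply, hΦ, liftS_of]
      by_cases h : u.1 = v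
      · rw [dif_pos h]
        obtain ⟨u1, hu1⟩ := u
        dsimp only at h
        subst h
        rw [MonoidHom.comp_apply, hΨ]
        show ofS G Γ ⟨u1, hv⟩ (castHom Γ rfl x) * inclHom G Γ Set.diff_subset 1 = _
        rw [map_one, mul_one]
        rfl
      · rw [dif_neg h, MonoidHom.comp_apply, hΨ]
        show ofS G Γ ⟨v, hv⟩ 1 * inclHom G Γ Set.diff_subset (ofS G Γ (⟨u.1, u.2, h⟩ : S) x) = _
        rw [map_one, one_mul, inclHom_of]
    intro a b hab
    have := DFunLike.congr_arg Ψ hab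
    rwa [← MonoidHom.comp_apply, ← MonoidHom.comp_apply, hcomp, MonoidHom.id_apply,
      MonoidHom.id_apply] at this

end Main

end

end GraphProductAux
namespace GraphProductAux

noncomputable section

open Monoid Function

variable {V : Type*} (G : SimpleGraph V) (Γ : V → Type*) [∀ v, Group (Γ v)]

/-- The amalgam case: `A` decomposes over the star of `v`. -/
lemma GP_amalgam_isTorsionFree {A : Set V} {v : V} (hv : v ∈ A)
    (hS : Monoid.IsTorsionFree (GP G Γ (A \ {v})))
    (hT : Monoid.IsTorsionFree (GP G Γ (insert v {u | u ∈ A ∧ G.Adj v u}))) :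
    Monoid.IsTorsionFree (GP G Γ A) := by
  classical
  set L : Set V := {u | u ∈ A ∧ G.Adj v u} with hLdef
  set S : Set V := A \ {v} with hSdef
  set T : Set V := insert v L with hTdef
  have hLS : L ⊆ S := fun u hu =>
    ⟨hu.1, fun hmem => G.loopless.irrefl v (Set.mem_singleton_iff.mp hmem ▸ hu.2)⟩
  have hLT : L ⊆ T := Set.subset_insert _ _
  have hSA : S ⊆ A := Set.diff_subset
  have hTA : T ⊆ A := Set.insert_subset hv fun u hu => hu.1
  have hLA : L ⊆ A := hLS.trans hSA
  set f : GP G Γ L →* GP G Γ S := inclHom G Γ hLS with hfdef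
  set g : GP G Γ L →* GP G Γ T := inclHom G Γ hLT with hgdef
  have cross : ∀ (u : V) (hu : u ∈ L) (x : Γ u),
      (Monoid.PushoutI.of (φ := boolφ f g) false) (ofS G Γ (⟨u, hLS hu⟩ : S) x) =
      (Monoid.PushoutI.of (φ := boolφ f g) true) (ofS G Γ (⟨u, hLT hu⟩ : T) x) := by
    intro u hu x
    have h1 : ofS G Γ (⟨u, hLS hu⟩ : S) x = f (ofS G Γ (⟨u, hu⟩ : L) x) := by
      rw [hfdef, inclHom_of]
    have h2 : ofS G Γ (⟨u, hLT hu⟩ : T) x = g (ofS G Γ (⟨u, hu⟩ : L) x) := by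
      rw [hgdef, inclHom_of]
    rw [h1, h2]
    exact (Monoid.PushoutI.of_apply_eq_base (boolφ f g) false _).trans
      (Monoid.PushoutI.of_apply_eq_base (boolφ f g) true _).symm
  set ff : ∀ u : A, Γ u.1 →* Monoid.PushoutI (boolφ f g) := fun u =>
    if h : u.1 = v
      then (Monoid.PushoutI.of (φ := boolφ f g) true).comp
        (ofS G Γ (⟨u.1, by rw [h]; exact Set.mem_insert _ _⟩ : T))
      else (Monoid.PushoutI.of (φ := boolφ f g) false).comp
        (ofS G Γ (⟨u.1, u.2, h⟩ : S)) with hffdef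
  have hff : ∀ u w : A, G.Adj u.1 w.1 → ∀ x y, Commute (ff u x) (ff w y) := by
    intro u w huw x y
    rw [hffdef]
    dsimp only
    split_ifs with h1 h2 h2
    · exact absurd huw (by rw [h1, h2]; exact G.loopless.irrefl v)
    · have hwL : w.1 ∈ L := ⟨w.2, h1 ▸ huw⟩
      exact (congrArg (Commute _) (cross w.1 hwL y)).mpr
        ((commS G Γ (A := T) (u := ⟨u.1, by rw [h1]; exact Set.mem_insert _ _⟩)
          (v := ⟨w.1, hLT hwL⟩) huw x y).map (Monoid.PushoutI.of (φ := boolφ f g) true))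
    · have huL : u.1 ∈ L := ⟨u.2, (h2 ▸ huw : G.Adj u.1 v).symm⟩
      exact ((congrArg (Commute _) (cross u.1 huL x)).mpr
        ((commS G Γ (A := T) (u := ⟨w.1, by rw [h2]; exact Set.mem_insert _ _⟩)
          (v := ⟨u.1, hLT huL⟩) huw.symm y x).map
            (Monoid.PushoutI.of (φ := boolφ f g) true))).symm
    · show Commute
          ((Monoid.PushoutI.of (φ := boolφ f g) false) (ofS G Γ (⟨u.1, u.2, h1⟩ : S) x))
          ((Monoid.PushoutI.of (φ := boolφ f g) false) (ofS G Γ (⟨w.1, w.2, h2⟩ : S) y))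
      exact (commS G Γ (A := S) (u := ⟨u.1, u.2, h1⟩) (v := ⟨w.1, w.2, h2⟩) huw x y).map
        (Monoid.PushoutI.of (φ := boolφ f g) false)
  set Φ : GP G Γ A →* Monoid.PushoutI (boolφ f g) := liftS G Γ ff hff with hΦdef
  set ψfam : ∀ b, boolFam (GP G Γ S) (GP G Γ T) b →* GP G Γ A := fun b =>
    match b with
    | false => inclHom G Γ hSA
    | true => inclHom G Γ hTA
    with hψdef
  have hΨcompat : ∀ b, (ψfam b).comp (boolφ f g b) = inclHom G Γ hLA := by
    intro b
    cases b
    · show (inclHom G Γ hSA).comp f = inclHom G Γ hLA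
      refine extS G Γ ?_
      intro u x
      exact (congrArg (inclHom G Γ hSA) (inclHom_of G Γ hLS u x)).trans
        ((inclHom_of G Γ hSA ⟨u.1, hLS u.2⟩ x).trans (inclHom_of G Γ hLA u x).symm)
    · show (inclHom G Γ hTA).comp g = inclHom G Γ hLA
      refine extS G Γ ?_
      intro u x
      exact (congrArg (inclHom G Γ hTA) (inclHom_of G Γ hLT u x)).trans
        ((inclHom_of G Γ hTA ⟨u.1, hLT u.2⟩ x).trans (inclHom_of G Γ hLA u x).symm)
  set Ψ : Monoid.PushoutI (boolφ f g) →* GP G Γ A :=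
    Monoid.PushoutI.lift ψfam (inclHom G Γ hLA) hΨcompat with hΨdef
  have hcomp : Ψ.comp Φ = MonoidHom.id _ := by
    refine extS G Γ ?_
    intro u x
    rw [MonoidHom.comp_apply, MonoidHom.id_apply, hΦdef, liftS_of, hffdef]
    dsimp only
    split_ifs with h
    · exact (Monoid.PushoutI.lift_of ψfam (inclHom G Γ hLA) hΨcompat (i := true)
        (ofS G Γ (⟨u.1, by rw [h]; exact Set.mem_insert _ _⟩ : T) x)).trans
        (inclHom_of G Γ hTA ⟨u.1, by rw [h]; exact Set.mem_insert _ _⟩ x)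
    · exact (Monoid.PushoutI.lift_of ψfam (inclHom G Γ hLA) hΨcompat (i := false)
        (ofS G Γ (⟨u.1, u.2, h⟩ : S) x)).trans
        (inclHom_of G Γ hSA ⟨u.1, u.2, h⟩ x)
  have hinj : Injective Φ := by
    intro a b hab
    have := DFunLike.congr_arg Ψ hab
    rwa [← MonoidHom.comp_apply, ← MonoidHom.comp_apply, hcomp, MonoidHom.id_apply,
      MonoidHom.id_apply] at this
  exact isTorsionFree_of_injective Φ hinj
    (amalgam_isTorsionFree f g (inclHom_injective G Γ hLS) (inclHom_injective G Γ hLT) hS hT)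

lemma GP_isTorsionFree [Fintype V] (hΓ : ∀ v, Monoid.IsTorsionFree (Γ v)) :
    ∀ (n : ℕ) (A : Set V), A.ncard ≤ n → Monoid.IsTorsionFree (GP G Γ A) := by
  intro n
  induction n with
  | zero =>
    intro A hA
    obtain rfl : A = ∅ := (Set.ncard_eq_zero A.toFinite).mp (Nat.le_zero.mp hA)
    exact GP_empty_isTorsionFree G Γ
  | succ n ih =>
    intro A hA
    rcases Set.eq_empty_or_nonempty A with rfl | ⟨v, hv⟩
    · exact GP_empty_isTorsionFree G Γ
    by_cases hjoin : ∀ u ∈ A, u ≠ v → G.Adj v u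
    · refine GP_join_isTorsionFree G Γ hv hjoin (hΓ v) (ih _ ?_)
      have := Set.ncard_diff_singleton_lt_of_mem hv A.toFinite
      omega
    · push_neg at hjoin
      obtain ⟨w, hwA, hwv, hwn⟩ := hjoin
      refine GP_amalgam_isTorsionFree G Γ hv (ih _ ?_) (ih _ ?_)
      · have := Set.ncard_diff_singleton_lt_of_mem hv A.toFinite
        omega
      · have hwT : w ∉ insert v {u | u ∈ A ∧ G.Adj v u} := by
          intro hmem
          rcases Set.mem_insert_iff.mp hmem with h | h
          · exact hwv h
          · exact hwn h.2
        have hssub : insert v {u | u ∈ A ∧ G.Adj v u} ⊂ A :=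
          (Set.ssubset_iff_of_subset (Set.insert_subset hv fun u hu => hu.1)).mpr
            ⟨w, hwA, hwT⟩
        have := Set.ncard_lt_ncard hssub A.toFinite
        omega

end

end GraphProductAux

/-- If `𝒢` is a finite simple graph and each vertex group `Γ_v` is torsion-free, then the
graph product group `𝒢{Γ_v}` is torsion-free. -/
theorem graphProduct_isTorsionFree {V : Type*} [Fintype V] (G : SimpleGraph V)
    (Γ : V → Type*) [∀ v, Group (Γ v)] (h : ∀ v, Monoid.IsTorsionFree (Γ v)) :
    Monoid.IsTorsionFree (GraphProduct G Γ) := by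
  classical
  open GraphProductAux in
  refine isTorsionFree_of_injective
    (gpLift G Γ (fun v => ofS G Γ (⟨v, Set.mem_univ v⟩ : (Set.univ : Set V)))
      (fun u w huw g x => commS G Γ (A := Set.univ)
        (u := ⟨u, Set.mem_univ u⟩) (v := ⟨w, Set.mem_univ w⟩) huw g x))
    ?_ (GP_isTorsionFree G Γ h (Set.univ : Set V).ncard Set.univ le_rfl)
  have hcomp :
      (liftS G Γ (fun u : (Set.univ : Set V) => gpOf G Γ u.1)
          (fun u w huw g x => gp_commute G Γ huw g x)).comp
        (gpLift G Γ (fun v => ofS G Γ (⟨v, Set.mem_univ v⟩ : (Set.univ : Set V)))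
          (fun u w huw g x => commS G Γ (A := Set.univ)
            (u := ⟨u, Set.mem_univ u⟩) (v := ⟨w, Set.mem_univ w⟩) huw g x)) =
      MonoidHom.id _ := by
    refine gp_hom_ext G Γ ?_
    intro v x
    rw [MonoidHom.comp_apply, MonoidHom.id_apply, gpLift_of, liftS_of]
  intro a b hab
  have := DFunLike.congr_arg (liftS G Γ (fun u : (Set.univ : Set V) => gpOf G Γ u.1)
    (fun u w huw g x => gp_commute G Γ huw g x)) hab
  rwa [← MonoidHom.comp_apply, ← MonoidHom.comp_apply, hcomp, MonoidHom.id_apply,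
    MonoidHom.id_apply] at this
end

section
/- Let n ≥ 1 and let Γ = Γ₁ × ⋯ × Γₙ be a direct product of groups each of which is virtually prime. Suppose Σ₁ and Σ₂ are commuting subgroups of Γ such that the subgroup Σ₁Σ₂ they generate is isomorphic to Σ₁ × Σ₂ via multiplication and has finite index in Γ. Then there exist finite index subgroups Σᵢ⁰ ≤ Σᵢ for i = 1, 2, finite index subgroups Γⱼ⁰ ≤ Γⱼ for 1 ≤ j ≤ n, and a partition T₁ ⊔ T₂ = {1, …, n} such that, under the identification of subgroups of Γ with subgroups of the product, Σᵢ⁰ = ×_{j ∈ Tᵢ} Γⱼ⁰ for each i = 1, 2. -/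
/-- A group `G` is *virtually prime* if it admits no finite index subgroup `G₀` generated
by two infinite commuting subgroups. -/
def VirtuallyPrime (G : Type*) [Group G] : Prop :=
  ¬ ∃ (G₀ A B : Subgroup G), G₀.FiniteIndex ∧ A ≤ G₀ ∧ B ≤ G₀ ∧
      (A : Set G).Infinite ∧ (B : Set G).Infinite ∧
      (∀ a ∈ A, ∀ b ∈ B, a * b = b * a) ∧ A ⊔ B = G₀

/-- Unique prime factorization for products of virtually prime groups: if
`Σ₁, Σ₂ ≤ Γ₁ × ⋯ × Γₙ` are commuting subgroups with `Σ₁ ∩ Σ₂ = 1` (so that `Σ₁Σ₂ ≅ Σ₁ × Σ₂`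
via multiplication) generating a finite index subgroup, then there are finite index
subgroups `Σᵢ⁰ ≤ Σᵢ`, finite index subgroups `Γⱼ⁰ ≤ Γⱼ` and a partition
`T₁ ⊔ T₂ = {1, …, n}` with `Σᵢ⁰ = ×_{j ∈ Tᵢ} Γⱼ⁰`. -/
theorem virtuallyPrime_product_factorization {n : ℕ} (hn : 1 ≤ n)
    (Γ : Fin n → Type*) [∀ j, Group (Γ j)] (hprime : ∀ j, VirtuallyPrime (Γ j))
    (S₁ S₂ : Subgroup (∀ j, Γ j))
    (hcomm : ∀ a ∈ S₁, ∀ b ∈ S₂, a * b = b * a)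
    (hdisj : S₁ ⊓ S₂ = ⊥)
    (hfi : (S₁ ⊔ S₂).FiniteIndex) :
    ∃ (S₁₀ S₂₀ : Subgroup (∀ j, Γ j)) (Γ₀ : ∀ j, Subgroup (Γ j)) (T₁ T₂ : Finset (Fin n)),
      S₁₀ ≤ S₁ ∧ S₂₀ ≤ S₂ ∧ S₁₀.relIndex S₁ ≠ 0 ∧ S₂₀.relIndex S₂ ≠ 0 ∧
      (∀ j, (Γ₀ j).FiniteIndex) ∧ Disjoint T₁ T₂ ∧ T₁ ∪ T₂ = Finset.univ ∧
      S₁₀ = Subgroup.pi Set.univ (fun j => if j ∈ T₁ then Γ₀ j else ⊥) ∧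
      S₂₀ = Subgroup.pi Set.univ (fun j => if j ∈ T₂ then Γ₀ j else ⊥) := by
  classical
  let π : ∀ j, (∀ k, Γ k) →* Γ j := fun j => Pi.evalMonoidHom Γ j
  have hπsurj : ∀ j, Function.Surjective (π j) := fun j x => ⟨Pi.mulSingle j x, by simp [π]⟩
  -- Step 1: at most one of the projections of S₁, S₂ is infinite
  have step1 : ∀ j, ((S₁.map (π j) : Set (Γ j))).Finite ∨ ((S₂.map (π j) : Set (Γ j))).Finite := by
    intro j
    by_contra h
    push_neg at h
    obtain ⟨h1, h2⟩ := h
    apply hprime j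
    refine ⟨(S₁ ⊔ S₂).map (π j), S₁.map (π j), S₂.map (π j), ?_, ?_, ?_, h1, h2, ?_, ?_⟩
    · refine ⟨fun h0 => hfi.index_ne_zero ?_⟩
      have := Subgroup.index_map_dvd (S₁ ⊔ S₂) (hπsurj j)
      rw [h0] at this
      exact zero_dvd_iff.mp this
    · rw [Subgroup.map_sup]; exact le_sup_left
    · rw [Subgroup.map_sup]; exact le_sup_right
    · rintro a ⟨a', ha', rfl⟩ b ⟨b', hb', rfl⟩
      rw [← map_mul, ← map_mul, hcomm a' ha' b' hb']
    · rw [Subgroup.map_sup]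
  -- Step 2: the partition
  let T₁ : Finset (Fin n) := Finset.univ.filter (fun j => ((S₂.map (π j) : Set (Γ j))).Finite)
  let T₂ : Finset (Fin n) := T₁ᶜ
  have hT1 : ∀ j ∉ T₂, ((S₂.map (π j) : Set (Γ j))).Finite := by
    intro j hj
    have hj' : j ∈ T₁ := by simpa [T₂] using hj
    exact (Finset.mem_filter.mp hj').2
  have hT2 : ∀ j ∉ T₁, ((S₁.map (π j) : Set (Γ j))).Finite := by
    intro j hj
    have : ¬ ((S₂.map (π j) : Set (Γ j))).Finite := fun h => hj (Finset.mem_filter.mpr ⟨Finset.mem_univ _, h⟩)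
    exact (step1 j).resolve_right this
  -- blocks
  let P : Finset (Fin n) → Subgroup (∀ k, Γ k) := fun T =>
    Subgroup.pi Set.univ (fun j => if j ∈ T then (⊤ : Subgroup (Γ j)) else ⊥)
  have memP : ∀ (T : Finset (Fin n)) (x : ∀ k, Γ k), x ∈ P T ↔ ∀ j ∉ T, x j = 1 := by
    intro T x
    rw [show (x ∈ P T) ↔ (x ∈ Subgroup.pi Set.univ (fun j => if j ∈ T then (⊤ : Subgroup (Γ j)) else ⊥)) from Iff.rfl, Subgroup.mem_pi]
    constructor
    · intro h j hj
      have := h j (Set.mem_univ j)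
      rwa [if_neg hj, Subgroup.mem_bot] at this
    · intro h j _
      by_cases hj : j ∈ T
      · rw [if_pos hj]; trivial
      · rw [if_neg hj, Subgroup.mem_bot]; exact h j hj
  -- Step 3: the blocks have finite relindex
  have hblock : ∀ (S : Subgroup (∀ k, Γ k)) (T : Finset (Fin n)),
      (∀ j ∉ T, ((S.map (π j) : Set (Γ j))).Finite) → (P T).relIndex S ≠ 0 := by
    intro S T hfin
    let f : (∀ k, Γ k) →* (∀ j : {j // j ∉ T}, Γ j) := Pi.monoidHom (fun j => π j.1)
    have hker : (P T).subgroupOf S = (f.comp S.subtype).ker := by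
      ext s
      simp only [Subgroup.mem_subgroupOf, MonoidHom.mem_ker, MonoidHom.comp_apply]
      rw [memP]
      constructor
      · intro h; funext j; exact h j.1 j.2
      · intro h j hj; exact congrFun h ⟨j, hj⟩
    rw [Subgroup.relIndex, hker, Subgroup.index_ker]
    have hsub : ((f.comp S.subtype).range : Set (∀ j : {j // j ∉ T}, Γ j)) ⊆
        Set.pi Set.univ (fun (i : {j // j ∉ T}) => ((S.map (π i.1) : Set (Γ i.1)))) := by
      rintro _ ⟨s, rfl⟩ j _
      exact ⟨(s : ∀ k, Γ k), s.2, rfl⟩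
    have hfinite : ((f.comp S.subtype).range : Set (∀ j : {j // j ∉ T}, Γ j)).Finite :=
      (Set.Finite.pi (fun (i : {j // j ∉ T}) => hfin i.1 i.2)).subset hsub
    have hft := hfinite.to_subtype
    exact Nat.card_ne_zero.mpr ⟨⟨⟨1, one_mem _⟩⟩, hft⟩
  -- the injective multiplication homomorphism
  have hcomm' : ∀ (a : S₁) (b : S₂), Commute (S₁.subtype a) (S₂.subtype b) :=
    fun a b => hcomm a a.2 b b.2
  let μ : S₁ × S₂ →* (∀ k, Γ k) := (S₁.subtype).noncommCoprod (S₂.subtype) hcomm'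
  have hμapp : ∀ (a : S₁) (b : S₂), μ (a, b) = (a : ∀ k, Γ k) * (b : ∀ k, Γ k) := by
    intro a b; rfl
  have hμinj : Function.Injective μ := by
    rw [← MonoidHom.ker_eq_bot_iff]
    rw [eq_bot_iff]
    rintro ⟨a, b⟩ hab
    have h1 : (a : ∀ k, Γ k) * (b : ∀ k, Γ k) = 1 := hab
    have ha : (a : ∀ k, Γ k) ∈ S₁ ⊓ S₂ := by
      rw [Subgroup.mem_inf]
      refine ⟨a.2, ?_⟩
      have hab' : (a : ∀ k, Γ k) = (b : ∀ k, Γ k)⁻¹ := by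
        rw [eq_inv_iff_mul_eq_one]; exact h1
      rw [hab']; exact inv_mem b.2
    rw [hdisj, Subgroup.mem_bot] at ha
    have hb : (b : ∀ k, Γ k) = 1 := by
      rw [ha, one_mul] at h1; exact h1
    have : (⟨a, b⟩ : S₁ × S₂) = 1 := by
      ext : 1
      · exact Subtype.ext ha
      · exact Subtype.ext hb
    rw [this]; exact Subgroup.one_mem _
  -- the finite index subgroup W
  let K : Subgroup (S₁ × S₂) := ((P T₁).comap S₁.subtype).prod ((P T₂).comap S₂.subtype)
  let W := K.map μ
  have hWfi : W.index ≠ 0 := by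
    rw [Subgroup.index_map_of_injective _ hμinj]
    apply mul_ne_zero
    · rw [Subgroup.index_prod]
      apply mul_ne_zero
      · rw [Subgroup.index_comap, Subgroup.range_subtype]
        exact hblock S₁ T₁ hT2
      · rw [Subgroup.index_comap, Subgroup.range_subtype]
        exact hblock S₂ T₂ hT1
    · have hle : S₁ ⊔ S₂ ≤ μ.range := by
        apply sup_le
        · intro x hx
          exact ⟨(⟨x, hx⟩, 1), by simp [hμapp]⟩
        · intro x hx
          exact ⟨(1, ⟨x, hx⟩), by simp [hμapp]⟩
      exact ne_zero_of_dvd_ne_zero hfi.index_ne_zero (Subgroup.index_dvd_of_le hle)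
  have hWFI : W.FiniteIndex := ⟨hWfi⟩
  -- coordinate subgroups
  let C : ∀ j, Subgroup (∀ k, Γ k) := fun j => (MonoidHom.mulSingle Γ j).range
  -- key: for j ∈ T₁, S₁ ⊓ C j = W ⊓ C j (and symmetrically)
  have hkey1 : ∀ j ∈ T₁, S₁ ⊓ C j = W ⊓ C j := by
    intro j hj
    apply le_antisymm
    · rintro x ⟨hx1, hxc⟩
      refine ⟨?_, hxc⟩
      obtain ⟨g, rfl⟩ := hxc
      refine ⟨(⟨MonoidHom.mulSingle Γ j g, hx1⟩, 1), ⟨?_, ?_⟩, by simp [hμapp]⟩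
      · show (MonoidHom.mulSingle Γ j g : ∀ k, Γ k) ∈ P T₁
        rw [memP]
        intro k hk
        have : k ≠ j := fun h => hk (h ▸ hj)
        simp [MonoidHom.mulSingle_apply, Pi.mulSingle_eq_of_ne this]
      · exact Subgroup.one_mem _
    · rintro x ⟨hxw, hxc⟩
      refine ⟨?_, hxc⟩
      obtain ⟨⟨a, b⟩, ⟨haP, hbP⟩, rfl⟩ := hxw
      have haP : (a : ∀ k, Γ k) ∈ P T₁ := haP
      have hbP : (b : ∀ k, Γ k) ∈ P T₂ := hbP
      obtain ⟨g, hg⟩ := hxc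
      have hb1 : (b : ∀ k, Γ k) = 1 := by
        funext k
        by_cases hk : k ∈ T₁
        · have : k ∉ T₂ := by simp [T₂, hk]
          exact (memP T₂ _).mp hbP k this
        · have hka : (a : ∀ k, Γ k) k = 1 := (memP T₁ _).mp haP k hk
          have hkj : k ≠ j := fun h => hk (h ▸ hj)
          have hx : μ (a, b) k = 1 := by
            rw [← hg]
            simp [MonoidHom.mulSingle_apply, Pi.mulSingle_eq_of_ne hkj]
          rw [hμapp] at hx
          have : (a : ∀ k, Γ k) k * (b : ∀ k, Γ k) k = 1 := hx
          rwa [hka, one_mul] at this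
      rw [hμapp, hb1, mul_one]
      exact a.2
  have hkey2 : ∀ j ∈ T₂, S₂ ⊓ C j = W ⊓ C j := by
    intro j hj
    apply le_antisymm
    · rintro x ⟨hx2, hxc⟩
      refine ⟨?_, hxc⟩
      obtain ⟨g, rfl⟩ := hxc
      refine ⟨(1, ⟨MonoidHom.mulSingle Γ j g, hx2⟩), ⟨Subgroup.one_mem _, ?_⟩, by simp [hμapp]⟩
      show (MonoidHom.mulSingle Γ j g : ∀ k, Γ k) ∈ P T₂
      rw [memP]
      intro k hk
      have : k ≠ j := fun h => hk (h ▸ hj)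
      simp [MonoidHom.mulSingle_apply, Pi.mulSingle_eq_of_ne this]
    · rintro x ⟨hxw, hxc⟩
      refine ⟨?_, hxc⟩
      obtain ⟨⟨a, b⟩, ⟨haP, hbP⟩, rfl⟩ := hxw
      have haP : (a : ∀ k, Γ k) ∈ P T₁ := haP
      have hbP : (b : ∀ k, Γ k) ∈ P T₂ := hbP
      obtain ⟨g, hg⟩ := hxc
      have hjT : j ∉ T₁ := by
        intro h
        exact absurd hj (by simp [T₂, h])
      have ha1 : (a : ∀ k, Γ k) = 1 := by
        funext k
        by_cases hk : k ∈ T₁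
        · have hkj : k ≠ j := fun h => hjT (h ▸ hk)
          have hkb : (b : ∀ k, Γ k) k = 1 := by
            apply (memP T₂ _).mp hbP k
            simp [T₂, hk]
          have hx : μ (a, b) k = 1 := by
            rw [← hg]
            simp [MonoidHom.mulSingle_apply, Pi.mulSingle_eq_of_ne hkj]
          rw [hμapp] at hx
          have : (a : ∀ k, Γ k) k * (b : ∀ k, Γ k) k = 1 := hx
          rwa [hkb, mul_one] at this
        · exact (memP T₁ _).mp haP k hk
      rw [hμapp, ha1, one_mul]
      exact b.2
  -- the factor subgroups
  let Γ₀ : ∀ j, Subgroup (Γ j) := fun j =>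
    (if j ∈ T₁ then S₁ else S₂).comap (MonoidHom.mulSingle Γ j)
  have hΓfi : ∀ j, (Γ₀ j).index ≠ 0 := by
    intro j
    have hrange : (MonoidHom.mulSingle Γ j).range = C j := rfl
    have hWC : (W.subgroupOf (C j)).FiniteIndex := Subgroup.instFiniteIndex_subgroupOf W (C j)
    have hWrel : W.relIndex (C j) ≠ 0 := hWC.index_ne_zero
    by_cases hj : j ∈ T₁
    · have : Γ₀ j = S₁.comap (MonoidHom.mulSingle Γ j) := by simp [Γ₀, hj]
      rw [this, Subgroup.index_comap, hrange]
      rw [← Subgroup.inf_relIndex_right, hkey1 j hj, Subgroup.inf_relIndex_right]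
      exact hWrel
    · have hj2 : j ∈ T₂ := by simp [T₂, hj]
      have : Γ₀ j = S₂.comap (MonoidHom.mulSingle Γ j) := by simp [Γ₀, hj]
      rw [this, Subgroup.index_comap, hrange]
      rw [← Subgroup.inf_relIndex_right, hkey2 j hj2, Subgroup.inf_relIndex_right]
      exact hWrel
  -- the full product
  let F : Subgroup (∀ k, Γ k) := Subgroup.pi Set.univ Γ₀
  have hFfi : F.FiniteIndex := by
    have hF : F = ⨅ j, (Γ₀ j).comap (π j) := by
      ext x
      simp [F, Subgroup.mem_pi, Subgroup.mem_iInf, Subgroup.mem_comap, π]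
    rw [hF]
    apply Subgroup.finiteIndex_iInf
    intro j
    refine ⟨?_⟩
    rw [Subgroup.index_comap_of_surjective _ (hπsurj j)]
    exact hΓfi j
  -- the pieces
  let S₁₀ : Subgroup (∀ k, Γ k) := Subgroup.pi Set.univ (fun j => if j ∈ T₁ then Γ₀ j else ⊥)
  let S₂₀ : Subgroup (∀ k, Γ k) := Subgroup.pi Set.univ (fun j => if j ∈ T₂ then Γ₀ j else ⊥)
  have memPi : ∀ (H : ∀ j, Subgroup (Γ j)) (x : ∀ k, Γ k),
      x ∈ Subgroup.pi Set.univ H ↔ ∀ j, x j ∈ H j := by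
    intro H x
    rw [Subgroup.mem_pi]
    exact ⟨fun h j => h j trivial, fun h j _ => h j⟩
  have hSeq : ∀ (T : Finset (Fin n)),
      Subgroup.pi Set.univ (fun j => if j ∈ T then Γ₀ j else ⊥) = F ⊓ P T := by
    intro T
    ext x
    rw [Subgroup.mem_inf, memPi, show (x ∈ F) ↔ (x ∈ Subgroup.pi Set.univ Γ₀) from Iff.rfl,
      memPi, show (x ∈ P T) ↔ _ from Iff.rfl, memPi]
    constructor
    · intro h
      constructor
      · intro j
        by_cases hj : j ∈ T
        · have := h j; rwa [if_pos hj] at this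
        · have := h j; rw [if_neg hj, Subgroup.mem_bot] at this
          rw [this]; exact one_mem _
      · intro j
        by_cases hj : j ∈ T
        · rw [if_pos hj]; trivial
        · have := h j; rw [if_neg hj] at this
          rw [if_neg hj]; exact this
    · rintro ⟨h1, h2⟩ j
      by_cases hj : j ∈ T
      · rw [if_pos hj]; exact h1 j
      · have := h2 j; rw [if_neg hj] at this
        rw [if_neg hj]; exact this
  have hS10eq : S₁₀ = F ⊓ P T₁ := hSeq T₁
  have hS20eq : S₂₀ = F ⊓ P T₂ := hSeq T₂
  -- S₁₀ ≤ S₁ and S₂₀ ≤ S₂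
  have hle1 : S₁₀ ≤ S₁ := by
    intro x hx
    have hx' : ∀ j, x j ∈ (if j ∈ T₁ then Γ₀ j else ⊥) := fun j => hx j trivial
    rw [← Finset.noncommProd_mulSingle x]
    apply Subgroup.noncommProd_mem
    intro j _
    by_cases hj : j ∈ T₁
    · have h := hx' j; rw [if_pos hj] at h
      have h' : x j ∈ (Γ₀ j : Subgroup (Γ j)) := h
      rw [show (Γ₀ j) = (if j ∈ T₁ then S₁ else S₂).comap (MonoidHom.mulSingle Γ j) from rfl,
        if_pos hj, Subgroup.mem_comap] at h'
      exact h'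
    · have h := hx' j; rw [if_neg hj, Subgroup.mem_bot] at h
      rw [h, Pi.mulSingle_one]; exact one_mem _
  have hle2 : S₂₀ ≤ S₂ := by
    intro x hx
    have hx' : ∀ j, x j ∈ (if j ∈ T₂ then Γ₀ j else ⊥) := fun j => hx j trivial
    rw [← Finset.noncommProd_mulSingle x]
    apply Subgroup.noncommProd_mem
    intro j _
    by_cases hj : j ∈ T₂
    · have h := hx' j; rw [if_pos hj] at h
      have h' : x j ∈ (Γ₀ j : Subgroup (Γ j)) := h
      have hj1 : j ∉ T₁ := by
        intro hc
        exact absurd hj (by simp [T₂, hc])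
      rw [show (Γ₀ j) = (if j ∈ T₁ then S₁ else S₂).comap (MonoidHom.mulSingle Γ j) from rfl,
        if_neg hj1, Subgroup.mem_comap] at h'
      exact h'
    · have h := hx' j; rw [if_neg hj, Subgroup.mem_bot] at h
      rw [h, Pi.mulSingle_one]; exact one_mem _
  -- relindex conditions
  have hrel1 : S₁₀.relIndex S₁ ≠ 0 := by
    rw [hS10eq]
    apply Subgroup.relIndex_inf_ne_zero
    · exact (Subgroup.instFiniteIndex_subgroupOf F S₁).index_ne_zero
    · exact hblock S₁ T₁ hT2
  have hrel2 : S₂₀.relIndex S₂ ≠ 0 := by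
    rw [hS20eq]
    apply Subgroup.relIndex_inf_ne_zero
    · exact (Subgroup.instFiniteIndex_subgroupOf F S₂).index_ne_zero
    · exact hblock S₂ T₂ hT1
  exact ⟨S₁₀, S₂₀, Γ₀, T₁, T₂, hle1, hle2, hrel1, hrel2, fun j => ⟨hΓfi j⟩,
    disjoint_compl_right, Finset.union_compl T₁, rfl, rfl⟩
end

section
/- Let Λ be a countable group and Σ ≤ Λ a subgroup. Then there exists an increasing sequence of subgroups Ω₁ ≤ Ω₂ ≤ ⋯ of Λ such that: (i) each Ωₙ is contained in the virtual centralizer vC_Λ(Σ); (ii) each Ωₙ is normalized by Σ, i.e. sΩₙs⁻¹ = Ωₙ for all s ∈ Σ; (iii) ⋃_{n ≥ 1} Ωₙ = vC_Λ(Σ) as subsets of Λ; and (iv) the centralizer C_Σ(Ωₙ) = {s ∈ Σ : sω = ωs for all ω ∈ Ωₙ} has finite index in Σ for every n. In particular, the subgroups C_Σ(Ωₙ) form a descending sequence Σ ≥ C_Σ(Ω₁) ≥ C_Σ(Ω₂) ≥ ⋯ of finite index subgroups of Σ. -/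
open Subgroup

section Aux

variable {Λ : Type*} [Group Λ] (S : Subgroup Λ)

/-- The `S`-conjugation orbit of `g`. -/
private def sOrbit (g : Λ) : Set Λ := {x | ∃ s ∈ S, x = s * g * s⁻¹}

private lemma self_mem_sOrbit (g : Λ) : g ∈ sOrbit S g :=
  ⟨1, S.one_mem, by simp⟩

/-- Conjugation by `s ∈ S` preserves the relative index of the centralizer. -/
private lemma relIndex_centralizer_conj {s : Λ} (hs : s ∈ S) (g : Λ) :
    (Subgroup.centralizer {s * g * s⁻¹}).relIndex S
      = (Subgroup.centralizer {g}).relIndex S := by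
  let e : S ≃* S := MulAut.conj (⟨s, hs⟩ : S)
  have hcomap : ((Subgroup.centralizer {s * g * s⁻¹}).subgroupOf S).comap e.toMonoidHom
      = (Subgroup.centralizer {g}).subgroupOf S := by
    ext t
    simp only [Subgroup.mem_comap, Subgroup.mem_subgroupOf, mem_centralizer_singleton_iff]
    have hcoe : ((e.toMonoidHom t : S) : Λ) = s * (t : Λ) * s⁻¹ := by
      simp [e, MulAut.conj]
    rw [hcoe]
    constructor
    · intro h
      have h2 : s * ((t : Λ) * g) * s⁻¹ = s * (g * (t : Λ)) * s⁻¹ := by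
        calc s * ((t : Λ) * g) * s⁻¹ = (s * (t : Λ) * s⁻¹) * (s * g * s⁻¹) := by group
        _ = (s * g * s⁻¹) * (s * (t : Λ) * s⁻¹) := h
        _ = s * (g * (t : Λ)) * s⁻¹ := by group
      exact mul_left_cancel (mul_right_cancel h2)
    · intro h
      calc (s * (t : Λ) * s⁻¹) * (s * g * s⁻¹) = s * ((t : Λ) * g) * s⁻¹ := by group
      _ = s * (g * (t : Λ)) * s⁻¹ := by rw [h]
      _ = (s * g * s⁻¹) * (s * (t : Λ) * s⁻¹) := by group
  unfold Subgroup.relIndex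
  rw [← hcomap, Subgroup.index_comap_of_surjective _ e.surjective]

/-- Centralizer of the `S`-orbit has nonzero relative index in `S`. -/
private lemma relIndex_centralizer_sOrbit {g : Λ}
    (hg : (Subgroup.centralizer {g}).relIndex S ≠ 0) :
    (Subgroup.centralizer (sOrbit S g)).relIndex S ≠ 0 := by
  set H : Subgroup S := (Subgroup.centralizer {g}).subgroupOf S with hH
  have : H.FiniteIndex := ⟨hg⟩
  have hle : H.normalCore ≤ (Subgroup.centralizer (sOrbit S g)).subgroupOf S := by
    intro t ht
    rw [Subgroup.mem_subgroupOf, mem_centralizer_iff]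
    rintro x ⟨s, hs, rfl⟩
    have h1 : (⟨s, hs⟩ : S)⁻¹ * t * (⟨s, hs⟩ : S) ∈ H := by
      have := ht ((⟨s, hs⟩ : S)⁻¹)
      simpa using this
    rw [hH, Subgroup.mem_subgroupOf, mem_centralizer_singleton_iff] at h1
    have h1' : (s⁻¹ * (t : Λ) * s) * g = g * (s⁻¹ * (t : Λ) * s) := by
      simpa [mul_assoc] using h1
    -- goal: (s * g * s⁻¹) * t = t * (s * g * s⁻¹)
    have h2 : s * (g * (s⁻¹ * (t : Λ) * s)) * s⁻¹ = s * ((s⁻¹ * (t : Λ) * s) * g) * s⁻¹ := by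
      rw [h1']
    calc (s * g * s⁻¹) * (t : Λ) = s * (g * (s⁻¹ * (t : Λ) * s)) * s⁻¹ := by group
    _ = s * ((s⁻¹ * (t : Λ) * s) * g) * s⁻¹ := h2
    _ = (t : Λ) * (s * g * s⁻¹) := by group
  have hdvd : (Subgroup.centralizer (sOrbit S g)).relIndex S ∣ H.normalCore.index :=
    Subgroup.index_dvd_of_le hle
  have hnc : H.normalCore.index ≠ 0 := Subgroup.FiniteIndex.index_ne_zero
  intro h0
  rw [h0] at hdvd
  exact hnc (Nat.eq_zero_of_zero_dvd hdvd)

end Aux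

/-- For a countable group `Λ` and a subgroup `Σ ≤ Λ`, there is an increasing sequence of
subgroups `Ω₁ ≤ Ω₂ ≤ ⋯` of `Λ` such that: each `Ωₙ` is contained in the virtual
centralizer `vC_Λ(Σ)`; each `Ωₙ` is normalized by `Σ`; `⋃ₙ Ωₙ = vC_Λ(Σ)`; and the
centralizer `C_Σ(Ωₙ)` has finite index in `Σ` for every `n` (so the `C_Σ(Ωₙ)` form a
descending sequence of finite index subgroups of `Σ`). -/
theorem exists_increasing_sequence_virtualCentralizer {Λ : Type*} [Group Λ] [Countable Λ]
    (S : Subgroup Λ) :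
    ∃ Ω : ℕ → Subgroup Λ,
      Monotone Ω ∧
      (∀ n, ∀ g ∈ Ω n, (Subgroup.centralizer {g}).relIndex S ≠ 0) ∧
      (∀ n, ∀ s ∈ S, ∀ g : Λ, g ∈ Ω n ↔ s * g * s⁻¹ ∈ Ω n) ∧
      (∀ g : Λ, (∃ n, g ∈ Ω n) ↔ (Subgroup.centralizer {g}).relIndex S ≠ 0) ∧
      (∀ n, (Subgroup.centralizer (Ω n : Set Λ)).relIndex S ≠ 0) := by
  classical
  -- the virtual centralizer as a set
  set vC : Set Λ := {g | (Subgroup.centralizer {g}).relIndex S ≠ 0} with hvC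
  have hone : (1 : Λ) ∈ vC := by
    have h1 : Subgroup.centralizer ({(1 : Λ)} : Set Λ) = ⊤ := by
      ext x; simp [mem_centralizer_singleton_iff]
    simp only [hvC, Set.mem_setOf_eq, h1, Subgroup.relIndex_top_left]
    exact one_ne_zero
  -- vC is a subgroup
  have hmul : ∀ g h, g ∈ vC → h ∈ vC → g * h ∈ vC := by
    intro g h hg hh
    have h1 : (Subgroup.centralizer {g} ⊓ Subgroup.centralizer {h}).relIndex S ≠ 0 :=
      Subgroup.relIndex_inf_ne_zero hg hh
    have h2 : Subgroup.centralizer {g} ⊓ Subgroup.centralizer {h}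
        ≤ Subgroup.centralizer {g * h} := by
      intro x hx
      rw [Subgroup.mem_inf] at hx
      obtain ⟨hx1, hx2⟩ := hx
      rw [mem_centralizer_singleton_iff] at hx1 hx2 ⊢
      rw [← mul_assoc, hx1, mul_assoc, hx2, ← mul_assoc]
    intro h0
    exact h1 (Subgroup.relIndex_eq_zero_of_le_left h2 h0)
  have hinv : ∀ g, g ∈ vC → g⁻¹ ∈ vC := by
    intro g hg
    have : Subgroup.centralizer {g} = Subgroup.centralizer {g⁻¹} := by
      ext x
      simp only [mem_centralizer_singleton_iff]
      constructor
      · intro h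
        exact ((Commute.inv_right (h : Commute x g)) : x * g⁻¹ = g⁻¹ * x)
      · intro h
        have := Commute.inv_right (h : Commute x g⁻¹)
        simpa [Commute, SemiconjBy] using (this : x * g⁻¹⁻¹ = g⁻¹⁻¹ * x)
    show (Subgroup.centralizer {g⁻¹}).relIndex S ≠ 0
    rw [← this]
    exact hg
  -- enumeration of vC
  obtain ⟨u, hu⟩ : ∃ u : ℕ → Λ, Function.Surjective u :=
    have : Nonempty Λ := ⟨1⟩
    exists_surjective_nat Λ
  set f : ℕ → Λ := fun i => if u i ∈ vC then u i else 1 with hf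
  have hfvC : ∀ i, f i ∈ vC := by
    intro i
    by_cases h : u i ∈ vC
    · simpa [hf, h] using h
    · simpa [hf, h] using hone
  have hfsurj : ∀ g ∈ vC, ∃ i, f i = g := by
    intro g hg
    obtain ⟨i, hi⟩ := hu g
    exact ⟨i, by rw [hf]; simp [hi, hg]⟩
  -- the generating sets
  set X : ℕ → Set Λ := fun n => ⋃ i ∈ Finset.range n, sOrbit S (f i) with hX
  set Ω : ℕ → Subgroup Λ := fun n => Subgroup.closure (X n) with hΩ
  have hXmono : Monotone X := by
    intro a b hab x hx
    simp only [hX, Set.mem_iUnion] at hx ⊢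
    obtain ⟨i, hi, hxi⟩ := hx
    exact ⟨i, Finset.mem_range.mpr (lt_of_lt_of_le (Finset.mem_range.mp hi) hab), hxi⟩
  -- X n is stable under conjugation by s ∈ S
  have hXconj : ∀ n, ∀ s ∈ S, (fun x => s * x * s⁻¹) '' X n = X n := by
    intro n s hs
    ext x
    simp only [Set.mem_image, hX, Set.mem_iUnion, sOrbit, Set.mem_setOf_eq]
    constructor
    · rintro ⟨y, ⟨i, hi, t, ht, rfl⟩, rfl⟩
      exact ⟨i, hi, s * t, S.mul_mem hs ht, by group⟩
    · rintro ⟨i, hi, t, ht, rfl⟩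
      exact ⟨s⁻¹ * t * f i * t⁻¹ * s, ⟨i, hi, s⁻¹ * t, S.mul_mem (S.inv_mem hs) ht,
        by group⟩, by group⟩
  -- each element of X n lies in vC
  have hXvC : ∀ n, X n ⊆ vC := by
    intro n x hx
    simp only [hX, Set.mem_iUnion, sOrbit, Set.mem_setOf_eq] at hx
    obtain ⟨i, _, s, hs, rfl⟩ := hx
    show (Subgroup.centralizer {s * f i * s⁻¹}).relIndex S ≠ 0
    rw [relIndex_centralizer_conj S hs]
    exact hfvC i
  refine ⟨Ω, ?_, ?_, ?_, ?_, ?_⟩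
  · intro a b hab
    exact Subgroup.closure_mono (hXmono hab)
  · -- Ω n ⊆ vC
    intro n g hg
    have : Ω n ≤ ⟨⟨⟨vC, by intro a b; exact hmul a b⟩, hone⟩, fun {x} hx => hinv x hx⟩ :=
      Subgroup.closure_le _ |>.mpr (hXvC n)
    exact this hg
  · -- normalized by S
    intro n s hs g
    have hmap : (Ω n).map (MulAut.conj s).toMonoidHom = Ω n := by
      rw [hΩ]
      show (Subgroup.closure (X n)).map (MulAut.conj s).toMonoidHom = Subgroup.closure (X n)
      rw [MonoidHom.map_closure]
      congr 1
      have : ⇑(MulAut.conj s).toMonoidHom '' X n = (fun x => s * x * s⁻¹) '' X n := by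
        apply Set.image_congr
        intro x _
        simp [MulAut.conj, mul_assoc]
      rw [this, hXconj n s hs]
    constructor
    · intro hg
      rw [← hmap]
      exact ⟨g, hg, by simp [MulAut.conj, mul_assoc]⟩
    · intro hg
      have : s * g * s⁻¹ ∈ (Ω n).map (MulAut.conj s).toMonoidHom := by rw [hmap]; exact hg
      rw [Subgroup.mem_map_equiv] at this
      simpa [MulAut.conj, mul_assoc] using this
  · -- union = vC
    intro g
    constructor
    · rintro ⟨n, hg⟩
      have : Ω n ≤ ⟨⟨⟨vC, by intro a b; exact hmul a b⟩, hone⟩, fun {x} hx => hinv x hx⟩ :=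
        Subgroup.closure_le _ |>.mpr (hXvC n)
      exact this hg
    · intro hg
      obtain ⟨i, rfl⟩ := hfsurj g hg
      refine ⟨i + 1, Subgroup.subset_closure ?_⟩
      simp only [hX, Set.mem_iUnion]
      exact ⟨i, Finset.mem_range.mpr (Nat.lt_succ_self i), self_mem_sOrbit S (f i)⟩
  · -- finite index of centralizers
    have hXrel : ∀ m, (Subgroup.centralizer (X m)).relIndex S ≠ 0 := by
      intro n
      induction n with
      | zero =>
        have : X 0 = ∅ := by simp [hX]
        rw [this]
        have : Subgroup.centralizer (∅ : Set Λ) = ⊤ := by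
          ext x; simp [mem_centralizer_iff]
        rw [this, Subgroup.relIndex_top_left]
        exact one_ne_zero
      | succ m ih =>
        have hXsucc : X (m + 1) = X m ∪ sOrbit S (f m) := by
          rw [hX]
          simp only [Finset.range_add_one]
          rw [Finset.set_biUnion_insert]
          exact Set.union_comm _ _
        have : Subgroup.centralizer (X (m + 1))
            = Subgroup.centralizer (X m) ⊓ Subgroup.centralizer (sOrbit S (f m)) := by
          rw [hXsucc]
          ext x
          simp only [mem_centralizer_iff, Subgroup.mem_inf, Set.mem_union]
          constructor
          · intro h; exact ⟨fun y hy => h y (Or.inl hy), fun y hy => h y (Or.inr hy)⟩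
          · rintro ⟨h1, h2⟩ y (hy | hy)
            exacts [h1 y hy, h2 y hy]
        rw [this]
        exact Subgroup.relIndex_inf_ne_zero ih (relIndex_centralizer_sOrbit S (hfvC m))
    intro n
    have hcent : Subgroup.centralizer ((Ω n : Set Λ)) = Subgroup.centralizer (X n) := by
      apply le_antisymm
      · exact Subgroup.centralizer_le Subgroup.subset_closure
      · intro t ht
        rw [mem_centralizer_iff]
        intro h hh
        have : Subgroup.closure (X n) ≤ Subgroup.centralizer {t} := by
          apply Subgroup.closure_le _ |>.mpr
          intro x hx
          rw [SetLike.mem_coe, mem_centralizer_singleton_iff]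
          exact (mem_centralizer_iff).mp ht x hx
        exact (mem_centralizer_singleton_iff).mp (this hh)
    rw [hcent]
    exact hXrel n
end

section
/- Let Γ be a group and H ≤ Γ a subgroup. Then the virtual centralizer vC_Γ(H) is contained in the quasi-normalizer QN_Γ(H): for every g ∈ Γ such that the centralizer C_H(g) has finite index in H, there exists a finite subset F ⊆ Γ with Hg ⊆ ⋃_{f ∈ F} fH and gH ⊆ ⋃_{f ∈ F} Hf. -/
/-- The virtual centralizer is contained in the quasi-normalizer: if `g ∈ Γ` has
centralizer of finite index in a subgroup `H ≤ Γ`, then there is a finite set `F ⊆ Γ`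
with `Hg ⊆ ⋃_{f ∈ F} fH` and `gH ⊆ ⋃_{f ∈ F} Hf`. -/
theorem virtualCentralizer_subset_quasiNormalizer {Γ : Type*} [Group Γ]
    (H : Subgroup Γ) (g : Γ) (hg : (Subgroup.centralizer {g}).relIndex H ≠ 0) :
    ∃ F : Finset Γ,
      (∀ h ∈ H, ∃ f ∈ F, ∃ h' ∈ H, h * g = f * h') ∧
      (∀ h ∈ H, ∃ f ∈ F, ∃ h' ∈ H, g * h = h' * f) := by
  classical
  set C : Subgroup H := (Subgroup.centralizer {g}).subgroupOf H with hC
  have hidx : C.index ≠ 0 := hg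
  have hfin : Finite (H ⧸ C) := by
    rw [Subgroup.index] at hidx
    exact (Nat.card_ne_zero.mp hidx).2
  have : Fintype (H ⧸ C) := Fintype.ofFinite _
  refine ⟨(Finset.univ.image fun q : H ⧸ C => ((q.out : H) : Γ) * g) ∪
      (Finset.univ.image fun q : H ⧸ C => g * ((q.out : H) : Γ)⁻¹), ?_, ?_⟩
  · intro h hH
    set q : H ⧸ C := QuotientGroup.mk ⟨h, hH⟩ with hq
    set t : H := q.out with ht
    have hmem : t⁻¹ * (⟨h, hH⟩ : H) ∈ C := by
      rw [← QuotientGroup.eq, ht, hq]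
      exact Quotient.out_eq' _
    have hcomm : (t : Γ)⁻¹ * h * g = g * ((t : Γ)⁻¹ * h) := by
      rw [Subgroup.mem_subgroupOf, Subgroup.mem_centralizer_singleton_iff] at hmem
      simpa using hmem
    refine ⟨(t : Γ) * g, ?_, (t : Γ)⁻¹ * h, ?_, ?_⟩
    · exact Finset.mem_union_left _ (Finset.mem_image.mpr ⟨q, Finset.mem_univ _, rfl⟩)
    · exact H.mul_mem (H.inv_mem t.2) hH
    · rw [mul_assoc, ← hcomm]; group
  · intro h hH
    set q : H ⧸ C := QuotientGroup.mk ⟨h⁻¹, H.inv_mem hH⟩ with hq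
    set t : H := q.out with ht
    have hmem : t⁻¹ * (⟨h⁻¹, H.inv_mem hH⟩ : H) ∈ C := by
      rw [← QuotientGroup.eq, ht, hq]
      exact Quotient.out_eq' _
    have hcomm : (t : Γ)⁻¹ * h⁻¹ * g = g * ((t : Γ)⁻¹ * h⁻¹) := by
      rw [Subgroup.mem_subgroupOf, Subgroup.mem_centralizer_singleton_iff] at hmem
      simpa using hmem
    have hc2 : Commute ((t : Γ)⁻¹ * h⁻¹) g := hcomm
    have hc3 : ((t : Γ)⁻¹ * h⁻¹)⁻¹ * g = g * ((t : Γ)⁻¹ * h⁻¹)⁻¹ := hc2.inv_left.eq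
    refine ⟨g * (t : Γ)⁻¹, ?_, ((t : Γ)⁻¹ * h⁻¹)⁻¹, ?_, ?_⟩
    · exact Finset.mem_union_right _ (Finset.mem_image.mpr ⟨q, Finset.mem_univ _, rfl⟩)
    · exact H.inv_mem (H.mul_mem (H.inv_mem t.2) (H.inv_mem hH))
    · rw [← mul_assoc, hc3]; group
end
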